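/- Let R be a commutative ring, P a finite subset of R, and P_0, ..., P_r subsets of P such that (i) the union of the P_i equals P, (ii) P_0 has exactly one element, and (iii) for any two distinct elements p, p' of P_i with 0 < i ≤ r, there exists i' < i and an element of P_{i'} dividing p·p'. For each p choose an integer e(p) ≥ 1 and set q_i = Σ_{p ∈ P_i} p^{e(p)}. Then the radical of the ideal generated by P equals the radical of the ideal generated by q_0, ..., q_r. -/
import Mathlib


/-- Schmitt–Vogel lemma. -/
theorem schmitt_vogel {R : Type*} [CommRing R] [DecidableEq R] (r : ℕ) (P : Finset R)
    (Ps : Fin (r + 1) → Finset R)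
    (hsub : ∀ i, Ps i ⊆ P)
    (h1 : Finset.univ.biUnion Ps = P)
    (h2 : (Ps 0).card = 1)
    (h3 : ∀ i : Fin (r + 1), 0 < i → ∀ p ∈ Ps i, ∀ p' ∈ Ps i, p ≠ p' →
      ∃ i' : Fin (r + 1), i' < i ∧ ∃ q ∈ Ps i', q ∣ p * p')
    (e : R → ℕ) (he : ∀ p ∈ P, 1 ≤ e p) :
    Ideal.radical (Ideal.span (P : Set R)) =
      Ideal.radical (Ideal.span (Set.range fun i : Fin (r + 1) => ∑ p ∈ Ps i, p ^ e p)) := by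
  set K := Ideal.span (Set.range fun i : Fin (r + 1) => ∑ p ∈ Ps i, p ^ e p) with hK
  set J := Ideal.radical K with hJ
  -- each q_i lies in J
  have hqJ : ∀ i : Fin (r + 1), (∑ p ∈ Ps i, p ^ e p) ∈ J :=
    fun i => Ideal.le_radical (Ideal.subset_span ⟨i, rfl⟩)
  -- key claim : every element of Ps i lies in J
  have key : ∀ n : ℕ, ∀ i : Fin (r + 1), i.val = n → ∀ p ∈ Ps i, p ∈ J := by
    intro n
    induction n using Nat.strong_induction_on with
    | _ n ih =>
      intro i hi p hp
      have hmul : p * (∑ p' ∈ Ps i, p' ^ e p') ∈ J := J.mul_mem_left p (hqJ i)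
      have hsum : p * (∑ p' ∈ Ps i, p' ^ e p') =
          p ^ (e p + 1) + ∑ p' ∈ (Ps i).erase p, p * p' ^ e p' := by
        rw [Finset.mul_sum, ← Finset.add_sum_erase _ _ hp, pow_succ, mul_comm]
      have herase : ∀ p' ∈ (Ps i).erase p, p * p' ^ e p' ∈ J := by
        intro p' hp'
        obtain ⟨hne, hp'mem⟩ := Finset.mem_erase.mp hp'
        rcases Nat.eq_zero_or_pos i.val with hz | hpos
        · -- i = 0 : Ps 0 has one element, contradiction with p ≠ p'
          have hi0 : i = 0 := Fin.ext hz
          obtain ⟨a, ha⟩ := Finset.card_eq_one.mp h2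
          rw [hi0, ha] at hp hp'mem
          exact absurd (Finset.mem_singleton.mp hp'mem ▸ Finset.mem_singleton.mp hp)
            (Ne.symm hne)
        · obtain ⟨i', hi'lt, q, hq, hdvd⟩ := h3 i (Fin.pos_iff_ne_zero.mpr
            (fun h => by simp [h] at hpos)) p hp p' hp'mem (Ne.symm hne)
          have hqJ' : q ∈ J := ih i'.val (hi ▸ hi'lt) i' rfl q hq
          have : q ∣ p * p' ^ e p' := by
            have h1' : 1 ≤ e p' := he p' (hsub i hp'mem)
            calc q ∣ p * p' := hdvd
              _ ∣ p * p' ^ e p' := by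
                  obtain ⟨m, hm⟩ := Nat.exists_eq_add_of_le h1'
                  exact ⟨p' ^ m, by rw [hm]; ring⟩
          obtain ⟨c, hc⟩ := this
          rw [hc]
          exact J.mul_mem_right c hqJ'
      have hpow : p ^ (e p + 1) ∈ J := by
        have hs : (∑ p' ∈ (Ps i).erase p, p * p' ^ e p') ∈ J :=
          Ideal.sum_mem _ herase
        have := J.sub_mem hmul hs
        rwa [hsum, add_sub_cancel_right] at this
      exact Ideal.mem_radical_of_pow_mem (m := e p + 1) (by rwa [hJ] at hpow)
  apply le_antisymm
  · -- rad (span P) ≤ J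
    have hPJ : Ideal.span (P : Set R) ≤ J := by
      rw [Ideal.span_le]
      intro p hp
      have : p ∈ Finset.univ.biUnion Ps := h1 ▸ hp
      obtain ⟨i, _, hpi⟩ := Finset.mem_biUnion.mp this
      exact key i.val i rfl p hpi
    calc Ideal.radical (Ideal.span (P : Set R)) ≤ Ideal.radical J := Ideal.radical_mono hPJ
      _ = J := Ideal.radical_idem K
  · -- J ≤ rad (span P)
    have hKP : K ≤ Ideal.span (P : Set R) := by
      rw [hK, Ideal.span_le]
      rintro _ ⟨i, rfl⟩
      refine Ideal.sum_mem _ (fun p hp => ?_)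
      have hpP : p ∈ (P : Set R) := hsub i hp
      have hpmem : p ∈ Ideal.span (P : Set R) := Ideal.subset_span hpP
      have h1' : 1 ≤ e p := he p (hsub i hp)
      obtain ⟨m, hm⟩ := Nat.exists_eq_add_of_le h1'
      rw [hm, pow_add, pow_one]
      exact Ideal.mul_mem_right _ _ hpmem
    exact Ideal.radical_mono hKP
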